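/- Let f : ℝ → ℝ be given by f(x) = π⁻² Σ_{n=1}^∞ 2^{−3n} cos(2ⁿ π x). Then f ∈ C²(ℝ), and for every x ∈ ℝ, every a > 0, and every k > 2: liminf_{y→x} (f(y) − f(x) − f′(x)(y−x) − (½f″(x) − a)(y−x)²)/|y−x|^k = +∞. -/

import Mathlib

open Filter Real

/-- `f(x) = π⁻² ∑_{n ≥ 1} 2^{-3n} cos(2ⁿ π x)`. -/
noncomputable def hardyF (x : ℝ) : ℝ :=
  π ⁻¹ ^ 2 * ∑' m : ℕ, 2 ^ (-(3 : ℤ) * (m + 1)) * Real.cos (2 ^ (m + 1) * π * x)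

lemma hd_cos (A c x : ℝ) :
    HasDerivAt (fun x => A * Real.cos (c * x)) (-(A * c) * Real.sin (c * x)) x := by
  have h1 : HasDerivAt (fun x : ℝ => c * x) c x := by
    simpa using (hasDerivAt_id x).const_mul c
  have := ((Real.hasDerivAt_cos (c * x)).comp x h1).const_mul A
  exact this.congr_deriv (by ring)

lemma hd_sin (B c x : ℝ) :
    HasDerivAt (fun x => B * Real.sin (c * x)) ((B * c) * Real.cos (c * x)) x := by
  have h1 : HasDerivAt (fun x : ℝ => c * x) c x := by
    simpa using (hasDerivAt_id x).const_mul c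
  have := ((Real.hasDerivAt_sin (c * x)).comp x h1).const_mul B
  exact this.congr_deriv (by ring)

lemma deriv_cos1 (A c : ℝ) :
    deriv (fun x => A * Real.cos (c * x)) = fun x => -(A * c) * Real.sin (c * x) :=
  funext fun x => (hd_cos A c x).deriv

lemma deriv_cos2 (A c : ℝ) :
    deriv (deriv (fun x => A * Real.cos (c * x)))
      = fun x => -(A * c * c) * Real.cos (c * x) := by
  rw [deriv_cos1]
  funext x
  have := (hd_sin (-(A*c)) c x).deriv
  rw [this]; ring

noncomputable def hF (m : ℕ) (x : ℝ) : ℝ :=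
  2 ^ (-(3 : ℤ) * (m + 1)) * Real.cos (2 ^ (m + 1) * π * x)

noncomputable def hv (j m : ℕ) : ℝ :=
  2 ^ (-(3 : ℤ) * (m + 1)) * ((2 : ℝ) ^ (m + 1) * π) ^ j

lemma coeff_eq (m : ℕ) : (2 : ℝ) ^ (-(3 : ℤ) * (m + 1)) = (((2:ℝ) ^ (m+1)) ^ 3)⁻¹ := by
  rw [neg_mul, zpow_neg]
  congr 1
  rw [show ((3:ℤ) * (m + 1)) = ((3 * (m+1) : ℕ) : ℤ) by push_cast; ring, zpow_natCast]
  ring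

lemma hv_le (j m : ℕ) (hj : j ≤ 2) : hv j m ≤ π ^ 2 * (1/2 : ℝ) ^ (m+1) := by
  have ht : (1:ℝ) ≤ (2:ℝ) ^ (m+1) := one_le_pow₀ (by norm_num)
  have ht0 : (0:ℝ) < (2:ℝ) ^ (m+1) := by positivity
  have hhalf : ((1:ℝ)/2) ^ (m+1) = ((2:ℝ) ^ (m+1))⁻¹ := by
    rw [one_div, inv_pow]
  have hpi : (1:ℝ) ≤ π := by nlinarith [Real.pi_gt_three]
  have hpi0 : (0:ℝ) < π := Real.pi_pos
  rw [hv, coeff_eq, hhalf, mul_comm ((((2:ℝ) ^ (m+1)) ^ 3)⁻¹), ← div_eq_mul_inv,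
    ← div_eq_mul_inv, div_le_div_iff₀ (by positivity) ht0, mul_pow]
  set t := (2:ℝ)^(m+1) with htdef
  have hpi2 : (1:ℝ) ≤ π^2 := by nlinarith
  have hpil : π ≤ π^2 := by nlinarith
  have h2 : t^2 ≤ t^3 := by nlinarith
  have h3 : t ≤ t^3 := by nlinarith
  interval_cases j
  · calc t^0*π^0*t = t := by ring
      _ ≤ t^3 := h3
      _ = 1*t^3 := by ring
      _ ≤ π^2*t^3 := by nlinarith
  · calc t^1*π^1*t = π*t^2 := by ring
      _ ≤ π^2*t^3 := mul_le_mul hpil h2 (by positivity) (by positivity)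
  · calc t^2*π^2*t = π^2*t^3 := by ring
      _ ≤ π^2*t^3 := le_rfl

lemma hv_summable (j : ℕ) (hj : j ≤ 2) : Summable (hv j) := by
  have hs : Summable (fun m : ℕ => π^2 * (1/2:ℝ)^(m+1)) := by
    have := (summable_geometric_of_lt_one (by norm_num : (0:ℝ) ≤ 1/2)
      (by norm_num)).mul_left (π^2 * (1/2))
    refine this.congr fun m => ?_
    rw [pow_succ]; ring
  refine Summable.of_nonneg_of_le (fun m => ?_) (fun m => hv_le j m hj) hs
  rw [hv]; positivity

lemma hF_eq (m : ℕ) : hF m = fun x => (2:ℝ)^(-(3:ℤ)*(m+1)) * Real.cos (((2:ℝ)^(m+1)*π) * x) := by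
  funext x; rw [hF, mul_assoc]

lemma hF_contDiff (m : ℕ) : ContDiff ℝ 2 (hF m) := by
  rw [hF_eq]
  exact contDiff_const.mul (Real.contDiff_cos.of_le le_top |>.comp
    (contDiff_const.mul contDiff_id))

lemma hF_bound (j m : ℕ) (x : ℝ) (hj : j ≤ 2) :
    ‖iteratedFDeriv ℝ j (hF m) x‖ ≤ hv j m := by
  rw [norm_iteratedFDeriv_eq_norm_iteratedDeriv, hF_eq, hv]
  set A := (2:ℝ)^(-(3:ℤ)*(m+1)) with hA
  set c := (2:ℝ)^(m+1)*π with hc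
  have hA0 : 0 ≤ A := by rw [hA]; positivity
  have hc0 : 0 ≤ c := by rw [hc]; positivity
  have hcos := Real.abs_cos_le_one (c*x)
  have hsin := Real.abs_sin_le_one (c*x)
  interval_cases j
  · rw [iteratedDeriv_zero]
    rw [Real.norm_eq_abs, abs_mul, abs_of_nonneg hA0, pow_zero]
    nlinarith
  · rw [iteratedDeriv_one, deriv_cos1, Real.norm_eq_abs, abs_mul, abs_neg,
      abs_of_nonneg (by positivity), pow_one]
    exact mul_le_of_le_one_right (mul_nonneg hA0 hc0) hsin
  · rw [show (2:ℕ) = 1+1 from rfl, iteratedDeriv_succ, iteratedDeriv_one, deriv_cos2,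
      Real.norm_eq_abs, abs_mul, abs_neg, abs_of_nonneg (by positivity),
      show A*c^(1+1) = A*c*c by ring]
    exact mul_le_of_le_one_right (by positivity) hcos

lemma contDiff_hardyF : ContDiff ℝ 2 hardyF := by
  have h : ContDiff ℝ (2:ℕ∞) fun x => ∑' m, hF m x := by
    apply contDiff_tsum (v := hv) hF_contDiff
    · intro k hk
      exact hv_summable k (by exact_mod_cast hk)
    · intro k m x hk
      exact hF_bound k m x (by exact_mod_cast hk)
  have : hardyF = fun x => π⁻¹^2 * ∑' m, hF m x := rfl
  rw [this]
  exact contDiff_const.mul h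

open Asymptotics

lemma taylor2 (f : ℝ → ℝ) (hf : ContDiff ℝ 2 f) (x : ℝ) :
    (fun y => f y - f x - deriv f x * (y - x) - (1/2) * deriv (deriv f) x * (y - x)^2)
      =o[nhds x] (fun y => (y - x)^2) := by
  have hdf : Differentiable ℝ f := hf.differentiable (by norm_num)
  have hdf' : Differentiable ℝ (deriv f) := by
    have h2 : ContDiff ℝ (1 + 1 : ℕ) f := by exact_mod_cast hf
    exact ((contDiff_succ_iff_deriv (n := 1)).mp (by exact_mod_cast h2)).2.2.differentiable
      one_ne_zero
  set c := deriv (deriv f) x with hc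
  have hφ : (fun y => deriv f y - deriv f x - c * (y - x)) =o[nhds x] fun y => y - x := by
    have h := ((hdf' x).hasDerivAt : HasDerivAt (deriv f) c x)
    rw [hasDerivAt_iff_isLittleO] at h
    simpa [smul_eq_mul, mul_comm] using h
  set g : ℝ → ℝ := fun y => f y - f x - deriv f x * (y - x) - (1/2) * c * (y - x)^2 with hg
  have hg' : ∀ y, HasDerivAt g (deriv f y - deriv f x - c * (y - x)) y := by
    intro y
    have h1 : HasDerivAt f (deriv f y) y := (hdf y).hasDerivAt
    have hlin : HasDerivAt (fun y : ℝ => y - x) 1 y := (hasDerivAt_id y).sub_const x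
    have hq : HasDerivAt (fun y : ℝ => (y - x)^2) (2*(y-x)) y := by
      simpa using hlin.fun_pow 2
    have := ((h1.sub_const (f x)).sub (hlin.const_mul (deriv f x))).sub
      (hq.const_mul ((1/2) * c))
    exact this.congr_deriv (by ring)
  rw [isLittleO_iff]
  intro ε hε
  obtain ⟨δ, hδ0, hδ⟩ := Metric.eventually_nhds_iff.mp (isLittleO_iff.mp hφ hε)
  have hball : Metric.ball x δ ∈ nhds x := Metric.ball_mem_nhds x hδ0
  filter_upwards [hball] with y hy
  have hmem : ∀ t ∈ Metric.closedBall x |y - x|, ‖deriv g t‖ ≤ ε * |y - x| := by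
    intro t ht
    rw [Metric.mem_closedBall, Real.dist_eq] at ht
    have hty : dist t x < δ := by
      rw [Real.dist_eq]
      exact lt_of_le_of_lt ht (by simpa [Real.dist_eq] using hy)
    rw [(hg' t).deriv]
    calc ‖deriv f t - deriv f x - c * (t - x)‖ ≤ ε * ‖t - x‖ := hδ hty
      _ ≤ ε * |y - x| := by
          rw [Real.norm_eq_abs]
          exact mul_le_mul_of_nonneg_left ht hε.le
  have key := (convex_closedBall x |y - x|).norm_image_sub_le_of_norm_deriv_le
    (fun t _ => (hg' t).differentiableAt) hmem
    (Metric.mem_closedBall_self (abs_nonneg _))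
    (by rw [Metric.mem_closedBall, Real.dist_eq])
  have hgx : g x = 0 := by rw [hg]; ring
  rw [hgx, sub_zero, Real.norm_eq_abs] at key
  calc ‖g y‖ ≤ ε * |y - x| * |y - x| := key
    _ = ε * ‖(y - x)^2‖ := by
        rw [Real.norm_eq_abs, abs_pow]
        ring

theorem hardy_function_subexpansions :
    ContDiff ℝ 2 hardyF ∧
      ∀ x : ℝ, ∀ a : ℝ, 0 < a → ∀ k : ℕ, 2 < k →
        Tendsto (fun y : ℝ =>
            (hardyF y - hardyF x - deriv hardyF x * (y - x) -
              ((1 / 2) * deriv (deriv hardyF) x - a) * (y - x) ^ 2) / |y - x| ^ k)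
          (nhdsWithin x {x}ᶜ) atTop := by
  refine ⟨contDiff_hardyF, ?_⟩
  intro x a ha k hk
  have hlo := taylor2 hardyF contDiff_hardyF x
  have hev := isLittleO_iff.mp hlo (show (0:ℝ) < a/2 by linarith)
  -- the minorant tends to atTop
  have h1 : Tendsto (fun y : ℝ => |y - x|) (nhdsWithin x {x}ᶜ) (nhdsWithin 0 (Set.Ioi 0)) := by
    apply tendsto_nhdsWithin_of_tendsto_nhds_of_eventually_within
    · have h : Tendsto (fun y : ℝ => |y - x|) (nhds x) (nhds 0) := by
        simpa [Function.comp_def] using (continuous_abs.comp (continuous_sub_right x)).tendsto x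
      exact h.mono_left nhdsWithin_le_nhds
    · filter_upwards [self_mem_nhdsWithin] with y hy
      exact abs_pos.mpr (sub_ne_zero.mpr hy)
  have h2 : Tendsto (fun t : ℝ => t^(k-2)) (nhdsWithin 0 (Set.Ioi 0))
      (nhdsWithin 0 (Set.Ioi 0)) := by
    apply tendsto_nhdsWithin_of_tendsto_nhds_of_eventually_within
    · have h := ((continuous_pow (k-2)).tendsto 0).mono_left
        (nhdsWithin_le_nhds (s := Set.Ioi (0:ℝ)))
      rwa [zero_pow (by omega : k - 2 ≠ 0)] at h
    · filter_upwards [self_mem_nhdsWithin] with t ht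
      exact pow_pos (Set.mem_Ioi.mp ht) _
  have hlow : Tendsto (fun y : ℝ => a/2 * (|y - x|^(k-2))⁻¹) (nhdsWithin x {x}ᶜ) atTop :=
    Tendsto.const_mul_atTop (by linarith) (tendsto_inv_nhdsGT_zero.comp (h2.comp h1))
  apply tendsto_atTop_mono' _ ?_ hlow
  filter_upwards [hev.filter_mono nhdsWithin_le_nhds, self_mem_nhdsWithin] with y hy hyx
  have hne : y - x ≠ 0 := sub_ne_zero.mpr hyx
  have ht0 : 0 < |y - x| := abs_pos.mpr hne
  have hsq : ‖(y - x)^2‖ = (y - x)^2 := by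
    rw [Real.norm_eq_abs, abs_pow, sq_abs]
  rw [Real.norm_eq_abs, hsq] at hy
  have hN : (a/2) * (y - x)^2 ≤
      hardyF y - hardyF x - deriv hardyF x * (y - x) -
        ((1 / 2) * deriv (deriv hardyF) x - a) * (y - x) ^ 2 := by
    have habs := neg_abs_le (hardyF y - hardyF x - deriv hardyF x * (y - x) -
      1/2 * deriv (deriv hardyF) x * (y - x)^2)
    nlinarith [hy, habs]
  have hpow : |y - x| ^ k = |y - x|^(k-2) * (y - x)^2 := by
    rw [← sq_abs, ← pow_add]
    congr 1
    omega
  have hEq : a/2 * (|y - x|^(k-2))⁻¹ = ((a/2) * (y - x)^2) / |y - x| ^ k := by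
    rw [hpow]
    field_simp
  rw [hEq]
  gcongr
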